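/- For every hypergraph H, the game transversal number and the Staller-start game transversal number differ by at most one: |τ_g(H) − τ_g'(H)| ≤ 1. -/
import Mathlib


variable {V : Type} [Fintype V] [DecidableEq V]

/-- The set of legal moves in the transversal game with uncovered edge set `E`:
the vertices hitting at least one uncovered edge. -/
def playable (E : Finset (Finset V)) : Finset V :=
  Finset.univ.filter (fun v => ∃ e ∈ E, v ∈ e)

/-- The number of moves remaining in the transversal game with uncovered edge set `E`
under optimal play, where `ehTurn = true` iff Edge-hitter (the minimizer) moves next;
Staller (the maximizer) moves next iff `ehTurn = false`.  Each move must hit at least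
one uncovered edge, and the game ends when no uncovered edge remains. -/
def gameVal (ehTurn : Bool) (E : Finset (Finset V)) : ℕ :=
  if h : (playable E).Nonempty then
    1 +
      (if ehTurn then
        (playable E).attach.inf' (Finset.attach_nonempty_iff.mpr h)
          (fun v => gameVal (!ehTurn) (E.filter (fun e => v.1 ∉ e)))
      else
        (playable E).attach.sup' (Finset.attach_nonempty_iff.mpr h)
          (fun v => gameVal (!ehTurn) (E.filter (fun e => v.1 ∉ e))))
  else 0
termination_by E.card
decreasing_by
  all_goals
    obtain ⟨v, hv⟩ := v
    simp only [playable, Finset.mem_filter, Finset.mem_univ, true_and] at hv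
    obtain ⟨e, he, hve⟩ := hv
    exact Finset.card_lt_card (Finset.filter_ssubset.mpr ⟨e, he, by simp [hve]⟩)

/-- The game transversal number `τ_g`: Edge-hitter makes the first move. -/
def gameTransversalNum (E : Finset (Finset V)) : ℕ := gameVal true E

/-- The Staller-start game transversal number `τ_g'`: Staller makes the first move. -/
def stallerGameTransversalNum (E : Finset (Finset V)) : ℕ := gameVal false E

/-- The transversal number `τ`: the minimum size of a set of vertices meeting all edges. -/
noncomputable def transversalNum (E : Finset (Finset V)) : ℕ :=
  sInf {n | ∃ T : Finset V, (∀ e ∈ E, ∃ v ∈ T, v ∈ e) ∧ T.card = n}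

lemma playable_mono {E' E : Finset (Finset V)} (h : E' ⊆ E) : playable E' ⊆ playable E := by
  intro v hv
  simp only [playable, Finset.mem_filter, Finset.mem_univ, true_and] at *
  obtain ⟨e, he, hve⟩ := hv
  exact ⟨e, h he, hve⟩

lemma card_filter_lt {E : Finset (Finset V)} {v : V} (hv : v ∈ playable E) :
    (E.filter (fun e => v ∉ e)).card < E.card := by
  simp only [playable, Finset.mem_filter, Finset.mem_univ, true_and] at hv
  obtain ⟨e, he, hve⟩ := hv
  exact Finset.card_lt_card (Finset.filter_ssubset.mpr ⟨e, he, by simp [hve]⟩)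

lemma gameVal_of_empty {E : Finset (Finset V)} (b : Bool) (h : ¬(playable E).Nonempty) :
    gameVal b E = 0 := by
  rw [gameVal]; simp [h]

lemma gameVal_true_eq {E : Finset (Finset V)} (h : (playable E).Nonempty) :
    gameVal true E = 1 + (playable E).attach.inf' (Finset.attach_nonempty_iff.mpr h)
      (fun v => gameVal false (E.filter (fun e => v.1 ∉ e))) := by
  rw [gameVal]; simp [h]

lemma gameVal_false_eq {E : Finset (Finset V)} (h : (playable E).Nonempty) :
    gameVal false E = 1 + (playable E).attach.sup' (Finset.attach_nonempty_iff.mpr h)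
      (fun v => gameVal true (E.filter (fun e => v.1 ∉ e))) := by
  rw [gameVal]; simp [h]

lemma gv_true_le {E : Finset (Finset V)} {v : V} (hv : v ∈ playable E) :
    gameVal true E ≤ 1 + gameVal false (E.filter (fun e => v ∉ e)) := by
  have h : (playable E).Nonempty := ⟨v, hv⟩
  rw [gameVal_true_eq h]
  exact Nat.add_le_add_left
    (Finset.inf'_le (fun w : {x // x ∈ playable E} => gameVal false (E.filter (fun e => w.1 ∉ e)))
      (Finset.mem_attach _ ⟨v, hv⟩)) 1

lemma gv_false_ge {E : Finset (Finset V)} {v : V} (hv : v ∈ playable E) :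
    1 + gameVal true (E.filter (fun e => v ∉ e)) ≤ gameVal false E := by
  have h : (playable E).Nonempty := ⟨v, hv⟩
  rw [gameVal_false_eq h]
  exact Nat.add_le_add_left
    (Finset.le_sup' (fun w : {x // x ∈ playable E} => gameVal true (E.filter (fun e => w.1 ∉ e)))
      (Finset.mem_attach _ ⟨v, hv⟩)) 1

lemma gv_true_exists {E : Finset (Finset V)} (h : (playable E).Nonempty) :
    ∃ v ∈ playable E, gameVal true E = 1 + gameVal false (E.filter (fun e => v ∉ e)) := by
  obtain ⟨b, -, hb⟩ := Finset.exists_mem_eq_inf' (Finset.attach_nonempty_iff.mpr h)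
    (fun v : {x // x ∈ playable E} => gameVal false (E.filter (fun e => v.1 ∉ e)))
  exact ⟨b.1, b.2, by rw [gameVal_true_eq h, hb]⟩

lemma gv_false_exists {E : Finset (Finset V)} (h : (playable E).Nonempty) :
    ∃ v ∈ playable E, gameVal false E = 1 + gameVal true (E.filter (fun e => v ∉ e)) := by
  obtain ⟨b, -, hb⟩ := Finset.exists_mem_eq_sup' (Finset.attach_nonempty_iff.mpr h)
    (fun v : {x // x ∈ playable E} => gameVal true (E.filter (fun e => v.1 ∉ e)))
  exact ⟨b.1, b.2, by rw [gameVal_false_eq h, hb]⟩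

lemma main_induction :
    ∀ n (E : Finset (Finset V)), E.card ≤ n →
      (∀ E' ⊆ E, gameVal true E' ≤ gameVal true E) ∧
      (∀ E' ⊆ E, gameVal false E' ≤ gameVal false E) ∧
      gameVal true E ≤ gameVal false E + 1 ∧
      gameVal false E ≤ gameVal true E + 1 := by
  intro n
  induction n with
  | zero =>
    intro E hE
    have hE0 : E = ∅ := Finset.card_eq_zero.mp (Nat.le_zero.mp hE)
    subst hE0
    have hp : ¬(playable (∅ : Finset (Finset V))).Nonempty := by simp [playable]
    refine ⟨?_, ?_, ?_, ?_⟩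
    · intro E' hE'; rw [Finset.subset_empty.mp hE']
    · intro E' hE'; rw [Finset.subset_empty.mp hE']
    · rw [gameVal_of_empty true hp, gameVal_of_empty false hp]; omega
    · rw [gameVal_of_empty true hp, gameVal_of_empty false hp]; omega
  | succ n ih =>
    intro E hE
    have hsub : ∀ v ∈ playable E, (E.filter (fun e => v ∉ e)).card ≤ n :=
      fun v hv => Nat.lt_succ_iff.mp (lt_of_lt_of_le (card_filter_lt hv) hE)
    have hA : ∀ E' ⊆ E, gameVal true E' ≤ gameVal true E := by
      intro E' hE'
      by_cases h' : (playable E').Nonempty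
      · have h : (playable E).Nonempty := h'.mono (playable_mono hE')
        obtain ⟨v, hv, heq⟩ := gv_true_exists h
        rw [heq]
        by_cases hv' : v ∈ playable E'
        · have h1 := gv_true_le hv'
          have h2 := (ih _ (hsub v hv)).2.1 (E'.filter (fun e => v ∉ e))
            (Finset.filter_subset_filter _ hE')
          omega
        · have hsub2 : E' ⊆ E.filter (fun e => v ∉ e) := by
            intro e he
            simp only [Finset.mem_filter]
            refine ⟨hE' he, fun hve => hv' ?_⟩
            simp only [playable, Finset.mem_filter, Finset.mem_univ, true_and]
            exact ⟨e, he, hve⟩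
          have h1 := (ih _ (hsub v hv)).1 E' hsub2
          have h2 := (ih _ (hsub v hv)).2.2.1
          omega
      · rw [gameVal_of_empty _ h']; exact Nat.zero_le _
    have hB : ∀ E' ⊆ E, gameVal false E' ≤ gameVal false E := by
      intro E' hE'
      by_cases h' : (playable E').Nonempty
      · obtain ⟨w, hw', heq⟩ := gv_false_exists h'
        have hw : w ∈ playable E := playable_mono hE' hw'
        rw [heq]
        have h1 := (ih _ (hsub w hw)).1 (E'.filter (fun e => w ∉ e))
          (Finset.filter_subset_filter _ hE')
        have h2 := gv_false_ge hw
        omega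
      · rw [gameVal_of_empty _ h']; exact Nat.zero_le _
    have hC : gameVal true E ≤ gameVal false E + 1 := by
      by_cases h : (playable E).Nonempty
      · obtain ⟨w, hw⟩ := h
        have h1 := gv_true_le hw
        have h2 := (ih _ (hsub w hw)).2.2.2
        have h3 := gv_false_ge hw
        omega
      · rw [gameVal_of_empty true h, gameVal_of_empty false h]; omega
    have hD : gameVal false E ≤ gameVal true E + 1 := by
      by_cases h : (playable E).Nonempty
      · obtain ⟨w, hw, heqw⟩ := gv_false_exists h
        obtain ⟨v, hv, heqv⟩ := gv_true_exists h
        rw [heqw, heqv]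
        by_cases hvw : v ∈ playable (E.filter (fun e => w ∉ e))
        · have h1 := gv_true_le hvw
          have hss : (E.filter (fun e => w ∉ e)).filter (fun e => v ∉ e) ⊆
              E.filter (fun e => v ∉ e) := by
            intro e he
            simp only [Finset.mem_filter] at he ⊢
            tauto
          have h2 := (ih _ (hsub v hv)).2.1 _ hss
          omega
        · have hss : E.filter (fun e => w ∉ e) ⊆ E.filter (fun e => v ∉ e) := by
            intro e he
            have hve : v ∉ e := fun hc => hvw (by
              simp only [playable, Finset.mem_filter, Finset.mem_univ, true_and]
              exact ⟨e, by simpa using he, hc⟩)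
            simp only [Finset.mem_filter] at he ⊢
            exact ⟨he.1, hve⟩
          have h1 := (ih _ (hsub v hv)).1 _ hss
          have h2 := (ih _ (hsub v hv)).2.2.1
          omega
      · rw [gameVal_of_empty false h, gameVal_of_empty true h]; omega
    exact ⟨hA, hB, hC, hD⟩

/-- For every hypergraph `H`, `|τ_g(H) - τ_g'(H)| ≤ 1`. -/
theorem abs_gameTransversalNum_sub_stallerGameTransversalNum_le_one
    {V : Type} [Fintype V] [DecidableEq V] (E : Finset (Finset V))
    (hedge : ∀ e ∈ E, e.Nonempty) :
    |(gameTransversalNum E : ℤ) - (stallerGameTransversalNum E : ℤ)| ≤ 1 := by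
  obtain ⟨-, -, h1, h2⟩ := main_induction E.card E le_rfl
  simp only [gameTransversalNum, stallerGameTransversalNum]
  rw [abs_le]
  constructor <;> [omega; omega]
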